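/- Let V_max > 0 and let P ∈ (0,1) be fixed. For σ² > 0 set c^B = 2/σ² + 2 and define R_B(u) = (u − Pu)²/((c^B − 2)(c^B − 1)) − (u − Pu)^{c^B}(V_max − Pu)^{2−c^B}/((c^B − 2)(c^B − 1)) − (u − Pu)^{c^B}(V_max − u)(V_max − Pu)^{1−c^B}/(c^B − 1). Then R_B(V_max·P) → 0 as σ² → 0⁺. -/

import Mathlib

open Filter Set Real

/-- The braking part `R_B` of the equilibrium condition, evaluated at the Greenshields
speed `u = V_max · P`, tends to `0` as the variance `σ² → 0⁺`.
Here `c^B = 2/σ² + 2`. -/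
theorem RB_tendsto_zero (Vmax P : ℝ) (hV : 0 < Vmax) (hP : P ∈ Set.Ioo (0 : ℝ) 1) :
    Tendsto (fun s : ℝ =>
        (Vmax * P - P * (Vmax * P)) ^ 2 / ((2 / s + 2 - 2) * (2 / s + 2 - 1))
          - (Vmax * P - P * (Vmax * P)) ^ (2 / s + 2)
              * (Vmax - P * (Vmax * P)) ^ (2 - (2 / s + 2))
              / ((2 / s + 2 - 2) * (2 / s + 2 - 1))
          - (Vmax * P - P * (Vmax * P)) ^ (2 / s + 2) * (Vmax - Vmax * P)
              * (Vmax - P * (Vmax * P)) ^ (1 - (2 / s + 2)) / (2 / s + 2 - 1))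
      (nhdsWithin 0 (Set.Ioi 0)) (nhds 0) := by
  obtain ⟨hP0, hP1⟩ := hP
  set A : ℝ := Vmax * P - P * (Vmax * P) with hAdef
  set B : ℝ := Vmax - P * (Vmax * P) with hBdef
  set C : ℝ := Vmax - Vmax * P with hCdef
  have hA : 0 < A := by
    have : A = Vmax * P * (1 - P) := by rw [hAdef]; ring
    rw [this]; exact mul_pos (mul_pos hV hP0) (by linarith)
  have hB : 0 < B := by
    have : B = Vmax * (1 - P * P) := by rw [hBdef]; ring
    rw [this]; exact mul_pos hV (by nlinarith)
  have hAB : A < B := by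
    have : B - A = Vmax * (1 - P) := by rw [hAdef, hBdef]; ring
    nlinarith
  have hf : Tendsto (fun s : ℝ => 2 / s + 2) (nhdsWithin 0 (Set.Ioi 0)) atTop := by
    apply tendsto_atTop_add_const_right
    have h := tendsto_inv_nhdsGT_zero.const_mul_atTop (show (0:ℝ) < 2 by norm_num)
    exact h.congr fun x => (div_eq_mul_inv 2 x).symm
  have hq : Tendsto (fun c : ℝ => (c - 2) * (c - 1)) atTop atTop :=
    (tendsto_atTop_add_const_right _ (-2) tendsto_id).atTop_mul_atTop₀
      (tendsto_atTop_add_const_right _ (-1) tendsto_id)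
  have hq1 : Tendsto (fun c : ℝ => c - 1) atTop atTop :=
    tendsto_atTop_add_const_right _ (-1) tendsto_id
  have hr : Tendsto (fun c : ℝ => (A / B) ^ c) atTop (nhds 0) :=
    tendsto_rpow_atTop_of_base_lt_one _ (by have := div_pos hA hB; linarith) ((div_lt_one hB).mpr hAB)
  have h1 : Tendsto (fun c : ℝ => A ^ 2 / ((c - 2) * (c - 1))) atTop (nhds 0) := by
    simpa [div_eq_mul_inv] using hq.inv_tendsto_atTop.const_mul (A ^ 2)
  have h2 : Tendsto (fun c : ℝ => (A / B) ^ c * (B ^ 2 / ((c - 2) * (c - 1)))) atTop (nhds 0) := by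
    have := hr.mul (hq.inv_tendsto_atTop.const_mul (B ^ 2))
    simpa [div_eq_mul_inv] using this
  have h3 : Tendsto (fun c : ℝ => (A / B) ^ c * (C * B / (c - 1))) atTop (nhds 0) := by
    have := hr.mul (hq1.inv_tendsto_atTop.const_mul (C * B))
    simpa [div_eq_mul_inv] using this
  have hg : Tendsto (fun c : ℝ =>
      A ^ 2 / ((c - 2) * (c - 1)) - (A / B) ^ c * (B ^ 2 / ((c - 2) * (c - 1)))
        - (A / B) ^ c * (C * B / (c - 1))) atTop (nhds 0) := by
    simpa using (h1.sub h2).sub h3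
  have := hg.comp hf
  refine this.congr fun s => ?_
  simp only [Function.comp]
  set c : ℝ := 2 / s + 2 with hc
  have hBc : (0:ℝ) < B ^ c := Real.rpow_pos_of_pos hB c
  have e1 : A ^ c * B ^ (2 - c) = (A / B) ^ c * B ^ 2 := by
    rw [Real.div_rpow hA.le hB.le, Real.rpow_sub hB]
    rw [show ((2:ℝ) : ℝ) = ((2:ℕ) : ℝ) by norm_num, Real.rpow_natCast]
    field_simp
  have e2 : A ^ c * C * B ^ (1 - c) = (A / B) ^ c * (C * B) := by
    rw [Real.div_rpow hA.le hB.le, Real.rpow_sub hB, Real.rpow_one]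
    field_simp
  have hcc : c + -2 = c - 2 := by ring
  rw [show A ^ c * B ^ (2 - c) / ((c - 2) * (c - 1)) = (A / B) ^ c * (B ^ 2 / ((c - 2) * (c - 1))) by
      rw [mul_div_assoc] at *; rw [← mul_div_assoc, e1, mul_div_assoc],
    show A ^ c * C * B ^ (1 - c) / (c - 1) = (A / B) ^ c * (C * B / (c - 1)) by
      rw [← mul_div_assoc, e2, mul_div_assoc]]
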